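/- The function y - wq satisfies d(y-wq)/dt = -(y-wq) along solutions of the system dx/dt = -(xw-α₂)x + 1/2, dy/dt = (xw+zq-1)y + α₁wq, dz/dt = -(zq-α₀)z - η/2, dw/dt = (xw-zq-α₂)w + yz, dq/dt = (zq-xw-α₀)q + xy, provided α₀+α₁+α₂ = 1. -/

import Mathlib

open Complex

theorem stmt_0 (α₀ α₁ α₂ η : ℂ) (hα : α₀ + α₁ + α₂ = 1)
    (x y z w q : ℝ → ℂ)
    (hx : ∀ t, HasDerivAt x (-(x t * w t - α₂) * x t + 1/2) t)
    (hy : ∀ t, HasDerivAt y ((x t * w t + z t * q t - 1) * y t + α₁ * w t * q t) t)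
    (hz : ∀ t, HasDerivAt z (-(z t * q t - α₀) * z t - η/2) t)
    (hw : ∀ t, HasDerivAt w ((x t * w t - z t * q t - α₂) * w t + y t * z t) t)
    (hq : ∀ t, HasDerivAt q ((z t * q t - x t * w t - α₀) * q t + x t * y t) t) :
    ∀ t, HasDerivAt (fun t => y t - w t * q t) (-(y t - w t * q t)) t := by
  intro t
  have h : HasDerivAt (fun t => y t - w t * q t) _ t := (hy t).sub ((hw t).mul (hq t))
  convert h using 1
  linear_combination (-(w t * q t)) * hα
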